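/- Let T : X → X be a map, G a finite group acting on X commuting with T, and x a periodic point of T. Then |O_T(x) ∩ O_G(x)| divides |O_G(x)|, and the number of distinct T-orbits mapped by the quotient map onto the T'-orbit of O_G(x) (i.e. the number of T-orbits contained in the union ⋃_{g∈G} g(O_T(x))) equals |O_G(x)| / |O_T(x) ∩ O_G(x)|. -/

import Mathlib

def Torbit {X : Type*} (T : X → X) (x : X) : Set X := {y | ∃ i : ℕ, T^[i] x = y}

section Aux

variable {X G : Type*} [Group G] [MulAction G X] (T : X → X)

lemma smul_iterate' (hcomm : ∀ (g : G) (y : X), g • T y = T (g • y)) (g : G) (i : ℕ) (y : X) :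
    g • T^[i] y = T^[i] (g • y) := by
  induction i with
  | zero => simp
  | succ n ih => rw [Function.iterate_succ_apply', Function.iterate_succ_apply', ← ih, hcomm]

lemma torbit_smul (hcomm : ∀ (g : G) (y : X), g • T y = T (g • y)) (g : G) (y : X) :
    Torbit T (g • y) = (g • ·) '' Torbit T y := by
  ext z
  constructor
  · rintro ⟨i, rfl⟩
    exact ⟨T^[i] y, ⟨i, rfl⟩, smul_iterate' T hcomm g i y⟩
  · rintro ⟨w, ⟨i, rfl⟩, rfl⟩
    exact ⟨i, (smul_iterate' T hcomm g i y).symm⟩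

lemma mem_torbit_self (y : X) : y ∈ Torbit T y := ⟨0, rfl⟩

lemma torbit_subset {y z : X} (h : z ∈ Torbit T y) : Torbit T z ⊆ Torbit T y := by
  obtain ⟨i, rfl⟩ := h
  rintro w ⟨j, rfl⟩
  exact ⟨j + i, by rw [Function.iterate_add_apply]⟩

lemma torbit_eq_of_mem {y z : X} (hy : y ∈ Function.periodicPts T) (h : z ∈ Torbit T y) :
    Torbit T z = Torbit T y := by
  obtain ⟨n, hn, hny⟩ := hy
  obtain ⟨i, rfl⟩ := h
  apply subset_antisymm (torbit_subset T ⟨i, rfl⟩)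
  apply torbit_subset
  refine ⟨i * n - i, ?_⟩
  rw [← Function.iterate_add_apply]
  have hle : i ≤ i * n := Nat.le_mul_of_pos_right i hn
  have h1 : i * n - i + i = n * i := by rw [Nat.sub_add_cancel hle, mul_comm]
  rw [h1, Function.iterate_mul]
  exact Function.IsFixedPt.iterate hny i

end Aux

theorem stmt_3 {X G : Type*} [Group G] [Fintype G] [MulAction G X]
    (T : X → X) (hcomm : ∀ (g : G) (y : X), g • T y = T (g • y))
    (x : X) (hx : x ∈ Function.periodicPts T) :
    (Torbit T x ∩ MulAction.orbit G x).ncard ∣ (MulAction.orbit G x).ncard ∧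
    {A : Set X | ∃ y ∈ ⋃ g : G, (g • ·) '' Torbit T x, A = Torbit T y}.ncard =
      (MulAction.orbit G x).ncard / (Torbit T x ∩ MulAction.orbit G x).ncard := by
  classical
  obtain ⟨n, hn, hnx⟩ := hx
  have hxper : x ∈ Function.periodicPts T := ⟨n, hn, hnx⟩
  have hgxper : ∀ g : G, g • x ∈ Function.periodicPts T := by
    intro g
    refine ⟨n, hn, ?_⟩
    show T^[n] (g • x) = g • x
    rw [← smul_iterate' T hcomm, hnx]
  set S := MulAction.orbit G x with hSdef
  have hSfin : S.Finite := Set.finite_range _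
  have hTfin : (Torbit T x).Finite := by
    apply Set.Finite.subset ((Set.finite_Iio n).image (fun i => T^[i] x))
    rintro y ⟨i, rfl⟩
    exact ⟨i % n, Nat.mod_lt _ hn, hnx.iterate_mod_apply i⟩
  set Ω := {A : Set X | ∃ y ∈ ⋃ g : G, (g • ·) '' Torbit T x, A = Torbit T y} with hΩdef
  have hΩ : Ω = Torbit T '' S := by
    ext A
    constructor
    · rintro ⟨y, hy, rfl⟩
      rw [Set.mem_iUnion] at hy
      obtain ⟨g, hy⟩ := hy
      rw [← torbit_smul T hcomm] at hy
      exact ⟨g • x, MulAction.mem_orbit x g, (torbit_eq_of_mem T (hgxper g) hy).symm⟩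
    · rintro ⟨y, ⟨g, rfl⟩, rfl⟩
      refine ⟨g • x, ?_, rfl⟩
      rw [Set.mem_iUnion]
      exact ⟨g, x, mem_torbit_self T x, rfl⟩
  have hΩfin : Ω.Finite := hΩ ▸ hSfin.image _
  set c := (Torbit T x ∩ S).ncard with hc
  have hcpos : 0 < c := by
    rw [hc, Set.ncard_pos (hTfin.inter_of_left _)]
    exact ⟨x, mem_torbit_self T x, MulAction.mem_orbit_self x⟩
  -- fibers
  have hfiber : ∀ A ∈ Ω, (hSfin.toFinset.filter (fun y => Torbit T y = A)).card = c := by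
    intro A hA
    rw [hΩ] at hA
    obtain ⟨y, ⟨g, rfl⟩, rfl⟩ := hA
    have hset : (↑(hSfin.toFinset.filter (fun y => Torbit T y = Torbit T (g • x))) : Set X)
        = (g • ·) '' (Torbit T x ∩ S) := by
      ext y
      simp only [Finset.coe_filter, Set.mem_setOf_eq, Set.Finite.mem_toFinset]
      constructor
      · rintro ⟨hyS, hyT⟩
        have hy2 : y ∈ Torbit T (g • x) := hyT ▸ mem_torbit_self T y
        rw [torbit_smul T hcomm] at hy2
        obtain ⟨z, hz, rfl⟩ := hy2
        refine ⟨z, ⟨hz, ?_⟩, rfl⟩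
        obtain ⟨h, hh⟩ := MulAction.mem_orbit_iff.mp hyS
        have hh' : h • x = g • z := hh
        have : z = g⁻¹ • (g • z) := by simp
        rw [this, ← hh']
        exact MulAction.mem_orbit_iff.mpr ⟨g⁻¹ * h, mul_smul g⁻¹ h x⟩
      · rintro ⟨z, ⟨hzT, hzS⟩, rfl⟩
        obtain ⟨h, hh⟩ := MulAction.mem_orbit_iff.mp hzS
        constructor
        · exact MulAction.mem_orbit_iff.mpr ⟨g * h, by rw [mul_smul, hh]⟩
        · show Torbit T (g • z) = Torbit T (g • x)
          rw [torbit_smul T hcomm, torbit_smul T hcomm,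
            torbit_eq_of_mem T hxper hzT]
    have := congrArg Set.ncard hset
    rw [Set.ncard_coe_finset] at this
    rw [this, Set.ncard_image_of_injective _ (MulAction.injective g)]
  have hsum : hSfin.toFinset.card = ∑ A ∈ hΩfin.toFinset, (hSfin.toFinset.filter
      (fun y => Torbit T y = A)).card := by
    apply Finset.card_eq_sum_card_fiberwise
    intro y hy
    rw [Finset.mem_coe, Set.Finite.mem_toFinset] at hy
    rw [Finset.mem_coe, Set.Finite.mem_toFinset]
    rw [hΩ]
    exact ⟨y, hy, rfl⟩
  have hmain : S.ncard = Ω.ncard * c := by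
    rw [Set.ncard_eq_toFinset_card _ hSfin, hsum,
      Finset.sum_congr rfl (fun A hA => hfiber A (hΩfin.mem_toFinset.mp hA)),
      Finset.sum_const, smul_eq_mul, Set.ncard_eq_toFinset_card Ω hΩfin]
  constructor
  · exact ⟨Ω.ncard, by rw [hmain, mul_comm]⟩
  · rw [hmain, Nat.mul_div_cancel _ hcpos]
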